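/- Let p ≥ 1 be an integer, λ ∈ {−1, 1}, and Δt > 0. Let u and v be Schwartz functions on ℝ², set m = (u + v)/2, and define W(x,y) = ∫_{−∞}^{x} ∂²_y m(s,y) ds. Assume the mass-zero constraint ∫_ℝ m(x,y) dx = 0 for every y ∈ ℝ. If for all (x,y) ∈ ℝ² the scheme equation (v(x,y) − u(x,y))/Δt + ∂³_x m(x,y) + (1/(p+1)) ∂_x (m^{p+1})(x,y) + λ W(x,y) = 0 holds, then the L²-norm is conserved: ∫_{ℝ²} v(x,y)² dx dy = ∫_{ℝ²} u(x,y)² dx dy. -/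

import Mathlib

open MeasureTheory Filter Set

open MeasureTheory Filter Set

-- line derivatives
lemma lineDerivX (g : SchwartzMap (ℝ × ℝ) ℝ) (x y : ℝ) :
    HasDerivAt (fun x' => g (x', y)) (LineDeriv.lineDerivOpCLM ℝ (SchwartzMap (ℝ × ℝ) ℝ) ((1:ℝ), (0:ℝ)) g (x, y)) x := by
  have h1 : HasDerivAt (fun x' : ℝ => ((x', y) : ℝ × ℝ)) ((1:ℝ), (0:ℝ)) x :=
    (hasDerivAt_id x).prodMk (hasDerivAt_const x y)
  have h2 := (g.differentiable.differentiableAt).hasFDerivAt (x := (x, y))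
  exact h2.comp_hasDerivAt x h1

lemma lineDerivY (g : SchwartzMap (ℝ × ℝ) ℝ) (x y : ℝ) :
    HasDerivAt (fun y' => g (x, y')) (LineDeriv.lineDerivOpCLM ℝ (SchwartzMap (ℝ × ℝ) ℝ) ((0:ℝ), (1:ℝ)) g (x, y)) y := by
  have h1 : HasDerivAt (fun y' : ℝ => ((x, y') : ℝ × ℝ)) ((0:ℝ), (1:ℝ)) y :=
    (hasDerivAt_const y x).prodMk (hasDerivAt_id y)
  have h2 := (g.differentiable.differentiableAt).hasFDerivAt (x := (x, y))
  exact h2.comp_hasDerivAt y h1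

-- product decay
lemma sm_prod_decay (g : SchwartzMap (ℝ × ℝ) ℝ) :
    ∃ C : ℝ, 0 ≤ C ∧ ∀ x y : ℝ, ((1 + x ^ 2) * (1 + y ^ 2)) * |g (x, y)| ≤ C := by
  obtain ⟨C0, hC0⟩ := g.decay 0 0
  obtain ⟨C4, hC4⟩ := g.decay 4 0
  have h0 : ∀ q : ℝ × ℝ, ‖g q‖ ≤ C0 := by
    intro q; have := hC0.2 q; simpa [norm_iteratedFDeriv_zero] using this
  have h4 : ∀ q : ℝ × ℝ, ‖q‖ ^ 4 * ‖g q‖ ≤ C4 := by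
    intro q; have := hC4.2 q; simpa [norm_iteratedFDeriv_zero] using this
  refine ⟨4 * (C0 + C4), ?_, ?_⟩
  · have hC0' : (0:ℝ) ≤ C0 := le_trans (norm_nonneg _) (h0 0)
    have hC4' : (0:ℝ) ≤ C4 := le_trans (by positivity) (h4 0)
    positivity
  intro x y
  have hx : |x| ≤ ‖((x, y) : ℝ × ℝ)‖ := by
    simpa using norm_fst_le ((x, y) : ℝ × ℝ)
  have hy : |y| ≤ ‖((x, y) : ℝ × ℝ)‖ := by
    simpa using norm_snd_le ((x, y) : ℝ × ℝ)
  set n := ‖((x, y) : ℝ × ℝ)‖ with hn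
  have hn0 : 0 ≤ n := norm_nonneg _
  have hx2 : x ^ 2 ≤ n ^ 2 := by
    have := sq_le_sq' (neg_abs_le x) (le_abs_self x)
    nlinarith [abs_nonneg x, sq_abs x]
  have hy2 : y ^ 2 ≤ n ^ 2 := by
    nlinarith [abs_nonneg y, sq_abs y]
  have key : (1 + x ^ 2) * (1 + y ^ 2) ≤ 4 * (1 + n ^ 4) := by nlinarith [sq_nonneg (n^2-1), sq_nonneg n, sq_nonneg x, sq_nonneg y, mul_le_mul hx2 hy2 (sq_nonneg y) (sq_nonneg n)]
  have hg : (0:ℝ) ≤ |g (x, y)| := abs_nonneg _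
  calc ((1 + x ^ 2) * (1 + y ^ 2)) * |g (x, y)| ≤ (4 * (1 + n ^ 4)) * |g (x, y)| := by
        apply mul_le_mul_of_nonneg_right key hg
    _ = 4 * (|g (x,y)| + n ^ 4 * |g (x,y)|) := by ring
    _ ≤ 4 * (C0 + C4) := by
        have := h0 (x, y); have := h4 (x, y)
        have h1 : |g (x,y)| ≤ C0 := by simpa [Real.norm_eq_abs] using h0 (x,y)
        have h2 : n ^ 4 * |g (x,y)| ≤ C4 := by
            have h4' := h4 (x,y); rw [Real.norm_eq_abs] at h4'; exact h4'
        linarith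

lemma tendsto_decay_atTop {C : ℝ} {g : ℝ → ℝ} (h : ∀ t, |g t| ≤ C / (1 + t ^ 2)) :
    Tendsto g atTop (nhds 0) := by
  have hb : Tendsto (fun t : ℝ => C / (1 + t ^ 2)) atTop (nhds 0) := by
    apply Tendsto.div_atTop (tendsto_const_nhds)
    exact tendsto_atTop_add_const_left _ 1 (tendsto_pow_atTop (two_ne_zero))
  exact squeeze_zero_norm (fun t => by simpa using h t) hb

lemma tendsto_decay_atBot {C : ℝ} {g : ℝ → ℝ} (h : ∀ t, |g t| ≤ C / (1 + t ^ 2)) :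
    Tendsto g atBot (nhds 0) := by
  have hb : Tendsto (fun t : ℝ => C / (1 + t ^ 2)) atBot (nhds 0) := by
    apply Tendsto.div_atTop (tendsto_const_nhds)
    apply tendsto_atTop_add_const_left _ 1
    have : Tendsto (fun t : ℝ => (-t) ^ 2) atBot atTop :=
      (tendsto_pow_atTop two_ne_zero).comp tendsto_neg_atBot_atTop
    simpa [neg_sq] using this
  exact squeeze_zero_norm (fun t => by simpa using h t) hb

lemma integrable_decay {C : ℝ} : Integrable (fun t : ℝ => C / (1 + t ^ 2)) := by
  simpa [div_eq_mul_inv, mul_comm] using integrable_inv_one_add_sq.const_mul C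

-- L0 : integral of a derivative over ℝ vanishes
lemma integral_deriv_eq_zero' {g g' : ℝ → ℝ} (hd : ∀ x, HasDerivAt g (g' x) x)
    (hi : Integrable g') (ht : Tendsto g atTop (nhds 0)) (hb : Tendsto g atBot (nhds 0)) :
    ∫ x : ℝ, g' x = 0 := by
  have h1 : ∫ x in Iic (0:ℝ), g' x = g 0 - 0 :=
    integral_Iic_of_hasDerivAt_of_tendsto' (fun x _ => hd x) hi.integrableOn hb
  have h2 : ∫ x in Ioi (0:ℝ), g' x = 0 - g 0 :=
    integral_Ioi_of_hasDerivAt_of_tendsto' (fun x _ => hd x) hi.integrableOn ht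
  have := intervalIntegral.integral_Iic_add_Ioi (b := (0:ℝ)) (μ := volume) hi.integrableOn hi.integrableOn
  linarith [this]

-- decay in x only / in y only
lemma sm_decay_x (g : SchwartzMap (ℝ × ℝ) ℝ) :
    ∃ C : ℝ, 0 ≤ C ∧ ∀ x y : ℝ, |g (x, y)| ≤ C / (1 + x ^ 2) := by
  obtain ⟨C, hC0, hC⟩ := sm_prod_decay g
  refine ⟨C, hC0, fun x y => ?_⟩
  rw [le_div_iff₀ (by positivity)]
  calc |g (x, y)| * (1 + x ^ 2) ≤ ((1 + x ^ 2) * (1 + y ^ 2)) * |g (x, y)| := by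
        nlinarith [mul_nonneg (mul_nonneg (by positivity : (0:ℝ) ≤ 1 + x ^ 2) (sq_nonneg y)) (abs_nonneg (g (x,y))), mul_nonneg (mul_nonneg (by positivity : (0:ℝ) ≤ 1 + y ^ 2) (sq_nonneg x)) (abs_nonneg (g (x,y)))]
    _ ≤ C := hC x y

lemma sm_decay_y (g : SchwartzMap (ℝ × ℝ) ℝ) :
    ∃ C : ℝ, 0 ≤ C ∧ ∀ x y : ℝ, |g (x, y)| ≤ C / (1 + y ^ 2) := by
  obtain ⟨C, hC0, hC⟩ := sm_prod_decay g
  refine ⟨C, hC0, fun x y => ?_⟩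
  rw [le_div_iff₀ (by positivity)]
  calc |g (x, y)| * (1 + y ^ 2) ≤ ((1 + x ^ 2) * (1 + y ^ 2)) * |g (x, y)| := by
        nlinarith [mul_nonneg (mul_nonneg (by positivity : (0:ℝ) ≤ 1 + x ^ 2) (sq_nonneg y)) (abs_nonneg (g (x,y))), mul_nonneg (mul_nonneg (by positivity : (0:ℝ) ≤ 1 + y ^ 2) (sq_nonneg x)) (abs_nonneg (g (x,y)))]
    _ ≤ C := hC x y

lemma cont_line_x (g : SchwartzMap (ℝ × ℝ) ℝ) (y : ℝ) : Continuous (fun x => g (x, y)) :=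
  g.continuous.comp (continuous_id.prodMk continuous_const)

lemma cont_line_y (g : SchwartzMap (ℝ × ℝ) ℝ) (x : ℝ) : Continuous (fun y => g (x, y)) :=
  g.continuous.comp (continuous_const.prodMk continuous_id)

lemma integrable_line_x (g : SchwartzMap (ℝ × ℝ) ℝ) (y : ℝ) :
    Integrable (fun x => g (x, y)) := by
  obtain ⟨C, _, hC⟩ := sm_decay_x g
  exact (integrable_decay (C := C)).mono' (cont_line_x g y).aestronglyMeasurable
    (Filter.Eventually.of_forall fun x => by simpa using hC x y)

lemma integrable_line_y (g : SchwartzMap (ℝ × ℝ) ℝ) (x : ℝ) :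
    Integrable (fun y => g (x, y)) := by
  obtain ⟨C, _, hC⟩ := sm_decay_y g
  exact (integrable_decay (C := C)).mono' (cont_line_y g x).aestronglyMeasurable
    (Filter.Eventually.of_forall fun y => by simpa using hC x y)

-- differentiate a vanishing marginal: L5
lemma integral_pderivY_eq_zero (g : SchwartzMap (ℝ × ℝ) ℝ)
    (h : ∀ y : ℝ, (∫ x : ℝ, g (x, y)) = 0) (y₀ : ℝ) :
    (∫ x : ℝ, LineDeriv.lineDerivOpCLM ℝ (SchwartzMap (ℝ × ℝ) ℝ) ((0:ℝ), (1:ℝ)) g (x, y₀)) = 0 := by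
  set g1 := LineDeriv.lineDerivOpCLM ℝ (SchwartzMap (ℝ × ℝ) ℝ) ((0:ℝ), (1:ℝ)) g with hg1
  obtain ⟨C, hC0, hC⟩ := sm_decay_x g1
  have key := hasDerivAt_integral_of_dominated_loc_of_deriv_le (μ := volume)
      (F := fun y x => g (x, y)) (F' := fun y x => g1 (x, y)) (x₀ := y₀)
      (bound := fun x => C / (1 + x ^ 2)) (s := Metric.ball y₀ 1) (Metric.ball_mem_nhds y₀ one_pos)
      (Filter.Eventually.of_forall fun y => (cont_line_x g y).aestronglyMeasurable)
      (integrable_line_x g y₀)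
      ((cont_line_x g1 y₀).aestronglyMeasurable)
      (Filter.Eventually.of_forall fun x => fun y _ => by simpa using hC x y)
      integrable_decay
      (Filter.Eventually.of_forall fun x => fun y _ => lineDerivY g x y)
  have h2 : HasDerivAt (fun y => ∫ x : ℝ, g (x, y)) (∫ x : ℝ, g1 (x, y₀)) y₀ := key.2
  have h3 : HasDerivAt (fun y : ℝ => (0:ℝ)) (∫ x : ℝ, g1 (x, y₀)) y₀ := by
    apply h2.congr_of_eventuallyEq
    exact Filter.Eventually.of_forall fun y => (h y).symm
  have h4 := (hasDerivAt_const y₀ (0:ℝ)).unique h3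
  exact h4.symm

noncomputable def pdx (g : SchwartzMap (ℝ × ℝ) ℝ) : SchwartzMap (ℝ × ℝ) ℝ :=
  LineDeriv.lineDerivOpCLM ℝ (SchwartzMap (ℝ × ℝ) ℝ) ((1:ℝ), (0:ℝ)) g
noncomputable def pdy (g : SchwartzMap (ℝ × ℝ) ℝ) : SchwartzMap (ℝ × ℝ) ℝ :=
  LineDeriv.lineDerivOpCLM ℝ (SchwartzMap (ℝ × ℝ) ℝ) ((0:ℝ), (1:ℝ)) g

lemma lineDerivX' (g : SchwartzMap (ℝ × ℝ) ℝ) (x y : ℝ) :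
    HasDerivAt (fun x' => g (x', y)) (pdx g (x, y)) x := lineDerivX g x y
lemma lineDerivY' (g : SchwartzMap (ℝ × ℝ) ℝ) (x y : ℝ) :
    HasDerivAt (fun y' => g (x, y')) (pdy g (x, y)) y := lineDerivY g x y

lemma sm_bdd (g : SchwartzMap (ℝ × ℝ) ℝ) : ∃ B : ℝ, 0 ≤ B ∧ ∀ q : ℝ × ℝ, |g q| ≤ B := by
  obtain ⟨C, hC⟩ := g.decay 0 0
  refine ⟨C, hC.1.le, fun q => ?_⟩
  have := hC.2 q; simpa [norm_iteratedFDeriv_zero] using this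

lemma integrable_bdd_mul_line_x {f : ℝ → ℝ} (hf : Continuous f) {B : ℝ}
    (hB : ∀ x, |f x| ≤ B) (h : SchwartzMap (ℝ × ℝ) ℝ) (y : ℝ) :
    Integrable (fun x => f x * h (x, y)) := by
  obtain ⟨C, hC0, hC⟩ := sm_decay_x h
  refine (integrable_decay (C := B * C)).mono'
    ((hf.mul (cont_line_x h y)).aestronglyMeasurable)
    (Filter.Eventually.of_forall fun x => ?_)
  rw [Real.norm_eq_abs, abs_mul, mul_div_assoc]
  exact mul_le_mul (hB x) (hC x y) (abs_nonneg _) (le_trans (abs_nonneg _) (hB x))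

lemma integrable_bdd_mul_line_y {f : ℝ → ℝ} (hf : Continuous f) {B : ℝ}
    (hB : ∀ y, |f y| ≤ B) (h : SchwartzMap (ℝ × ℝ) ℝ) (s : ℝ) :
    Integrable (fun y => f y * h (s, y)) := by
  obtain ⟨C, hC0, hC⟩ := sm_decay_y h
  refine (integrable_decay (C := B * C)).mono'
    ((hf.mul (cont_line_y h s)).aestronglyMeasurable)
    (Filter.Eventually.of_forall fun y => ?_)
  rw [Real.norm_eq_abs, abs_mul, mul_div_assoc]
  exact mul_le_mul (hB y) (hC s y) (abs_nonneg _) (le_trans (abs_nonneg _) (hB y))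

-- IBP A : ∫ g g_xxx = 0
lemma ibpA (g : SchwartzMap (ℝ × ℝ) ℝ) (y : ℝ) :
    ∫ x : ℝ, g (x, y) * pdx (pdx (pdx g)) (x, y) = 0 := by
  obtain ⟨B0, hB00, hB0⟩ := sm_bdd g
  obtain ⟨B1, hB10, hB1⟩ := sm_bdd (pdx g)
  obtain ⟨C0, hC00, hC0⟩ := sm_decay_x g
  obtain ⟨C1, hC10, hC1⟩ := sm_decay_x (pdx g)
  obtain ⟨C2, hC20, hC2⟩ := sm_decay_x (pdx (pdx g))
  set G : ℝ → ℝ := fun x => g (x, y) * pdx (pdx g) (x, y) - pdx g (x, y) ^ 2 / 2 with hG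
  have hd : ∀ x, HasDerivAt G (g (x, y) * pdx (pdx (pdx g)) (x, y)) x := by
    intro x
    have h1 := (lineDerivX' g x y).mul (lineDerivX' (pdx (pdx g)) x y)
    have h2 := (lineDerivX' (pdx g) x y).pow 2
    have h3 := h1.sub (h2.div_const 2)
    refine h3.congr_deriv ?_
    ring
  have hint : Integrable (fun x => g (x, y) * pdx (pdx (pdx g)) (x, y)) :=
    integrable_bdd_mul_line_x (cont_line_x g y) (fun x => hB0 (x, y)) _ y
  have hbound : ∀ x, |G x| ≤ (B0 * C2 + B1 * C1 / 2) / (1 + x ^ 2) := by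
    intro x
    have e1 : |g (x, y) * pdx (pdx g) (x, y)| ≤ B0 * (C2 / (1 + x ^ 2)) := by
      rw [abs_mul]
      exact mul_le_mul (hB0 _) (hC2 x y) (abs_nonneg _) hB00
    have e2 : |pdx g (x, y) ^ 2 / 2| ≤ B1 * (C1 / (1 + x ^ 2)) / 2 := by
      rw [abs_div, abs_pow]
      have : |pdx g (x, y)| ^ 2 ≤ B1 * (C1 / (1 + x ^ 2)) := by
        rw [sq]
        exact mul_le_mul (hB1 _) (hC1 x y) (abs_nonneg _) hB10
      rw [show |(2:ℝ)| = 2 by norm_num]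
      linarith
    calc |G x| ≤ |g (x, y) * pdx (pdx g) (x, y)| + |pdx g (x, y) ^ 2 / 2| := abs_sub _ _
      _ ≤ B0 * (C2 / (1 + x ^ 2)) + B1 * (C1 / (1 + x ^ 2)) / 2 := by linarith
      _ = (B0 * C2 + B1 * C1 / 2) / (1 + x ^ 2) := by ring
  exact integral_deriv_eq_zero' hd hint (tendsto_decay_atTop hbound) (tendsto_decay_atBot hbound)

-- IBP B : ∫ g^(n+1) g_x = 0
lemma ibpB (g : SchwartzMap (ℝ × ℝ) ℝ) (n : ℕ) (y : ℝ) :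
    ∫ x : ℝ, (g (x, y)) ^ (n + 1) * pdx g (x, y) = 0 := by
  obtain ⟨B0, hB00, hB0⟩ := sm_bdd g
  obtain ⟨C0, hC00, hC0⟩ := sm_decay_x g
  set G : ℝ → ℝ := fun x => (g (x, y)) ^ (n + 2) / (n + 2) with hG
  have hn2 : ((n : ℝ) + 2) ≠ 0 := by positivity
  have hd : ∀ x, HasDerivAt G ((g (x, y)) ^ (n + 1) * pdx g (x, y)) x := by
    intro x
    have h1 := ((lineDerivX' g x y).pow (n + 2)).div_const ((n : ℝ) + 2)
    refine h1.congr_deriv ?_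
    field_simp
    rw [show n + 2 - 1 = n + 1 by omega]
    push_cast
    ring
  have hcont : Continuous fun x => (g (x, y)) ^ (n + 1) :=
    (cont_line_x g y).pow (n + 1)
  have hbd : ∀ x, |(g (x, y)) ^ (n + 1)| ≤ B0 ^ (n + 1) := by
    intro x
    rw [abs_pow]
    exact pow_le_pow_left₀ (abs_nonneg _) (hB0 _) _
  have hint : Integrable (fun x => (g (x, y)) ^ (n + 1) * pdx g (x, y)) :=
    integrable_bdd_mul_line_x hcont hbd (pdx g) y
  have hbound : ∀ x, |G x| ≤ (B0 ^ (n + 1) * C0 / (n + 2)) / (1 + x ^ 2) := by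
    intro x
    have e1 : |g (x, y)| ^ (n + 2) ≤ B0 ^ (n + 1) * (C0 / (1 + x ^ 2)) := by
      calc |g (x, y)| ^ (n + 2) = |g (x, y)| ^ (n + 1) * |g (x, y)| := by ring
        _ ≤ B0 ^ (n + 1) * (C0 / (1 + x ^ 2)) :=
          mul_le_mul (pow_le_pow_left₀ (abs_nonneg _) (hB0 _) _) (hC0 x y) (abs_nonneg _)
            (by positivity)
    have h2 : (0:ℝ) < (n : ℝ) + 2 := by positivity
    rw [hG, abs_div, abs_pow]
    rw [show |((n : ℝ) + 2)| = (n : ℝ) + 2 from abs_of_pos h2]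
    have hx2 : (0:ℝ) < 1 + x ^ 2 := by positivity
    rw [div_le_div_iff₀ h2 hx2]
    calc |g (x,y)| ^ (n+2) * (1 + x^2)
        ≤ (B0 ^ (n+1) * (C0 / (1 + x^2))) * (1 + x^2) :=
          mul_le_mul_of_nonneg_right e1 hx2.le
      _ = B0 ^ (n+1) * C0 := by field_simp
      _ = B0 ^ (n+1) * C0 / ((n:ℝ)+2) * ((n:ℝ)+2) := by field_simp
  exact integral_deriv_eq_zero' hd hint (tendsto_decay_atTop hbound) (tendsto_decay_atBot hbound)

-- IBP D : ∫_y (g_y(x,·) g_y(s,·) + g(x,·) g_yy(s,·)) = 0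
lemma ibpD (g : SchwartzMap (ℝ × ℝ) ℝ) (x s : ℝ) :
    ∫ y : ℝ, (pdy g (x, y) * pdy g (s, y) + g (x, y) * pdy (pdy g) (s, y)) = 0 := by
  obtain ⟨B0, hB00, hB0⟩ := sm_bdd g
  obtain ⟨B1, hB10, hB1⟩ := sm_bdd (pdy g)
  obtain ⟨C1, hC10, hC1⟩ := sm_decay_y (pdy g)
  obtain ⟨C2, hC20, hC2⟩ := sm_decay_y (pdy (pdy g))
  set G : ℝ → ℝ := fun y => g (x, y) * pdy g (s, y) with hG
  have hd : ∀ y, HasDerivAt G (pdy g (x, y) * pdy g (s, y) + g (x, y) * pdy (pdy g) (s, y)) y :=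
    fun y => (lineDerivY' g x y).mul (lineDerivY' (pdy g) s y)
  have hint1 : Integrable (fun y => pdy g (x, y) * pdy g (s, y)) :=
    integrable_bdd_mul_line_y (cont_line_y (pdy g) x) (fun y => hB1 (x, y)) (pdy g) s
  have hint2 : Integrable (fun y => g (x, y) * pdy (pdy g) (s, y)) :=
    integrable_bdd_mul_line_y (cont_line_y g x) (fun y => hB0 (x, y)) (pdy (pdy g)) s
  have hbound : ∀ y, |G y| ≤ (B0 * C1) / (1 + y ^ 2) := by
    intro y
    rw [hG, abs_mul, mul_div_assoc]
    exact mul_le_mul (hB0 _) (hC1 s y) (abs_nonneg _) hB00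
  exact integral_deriv_eq_zero' hd (hint1.add hint2)
    (tendsto_decay_atTop hbound) (tendsto_decay_atBot hbound)

lemma sm_decay_mul (g : SchwartzMap (ℝ × ℝ) ℝ) :
    ∃ C : ℝ, 0 ≤ C ∧ ∀ x y : ℝ, |g (x, y)| ≤ C / (1 + x ^ 2) * (1 / (1 + y ^ 2)) := by
  obtain ⟨C, hC0, hC⟩ := sm_prod_decay g
  refine ⟨C, hC0, fun x y => ?_⟩
  rw [show C / (1 + x ^ 2) * (1 / (1 + y ^ 2)) = C / ((1 + x ^ 2) * (1 + y ^ 2)) by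
    rw [div_mul_div_comm, mul_one]]
  rw [le_div_iff₀ (by positivity), mul_comm]
  exact hC x y

noncomputable def Kfun (g : SchwartzMap (ℝ × ℝ) ℝ) : ℝ → ℝ → ℝ :=
  fun x s => ∫ y : ℝ, pdy g (x, y) * pdy g (s, y)

lemma Kfun_swap (g : SchwartzMap (ℝ × ℝ) ℝ) (x s : ℝ) : Kfun g x s = Kfun g s x := by
  unfold Kfun; simp_rw [mul_comm]

lemma Kfun_sm (g : SchwartzMap (ℝ × ℝ) ℝ) :
    StronglyMeasurable (fun z : ℝ × ℝ => Kfun g z.1 z.2) := by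
  have hc : Continuous (fun p : (ℝ × ℝ) × ℝ => pdy g (p.1.1, p.2) * pdy g (p.1.2, p.2)) := by
    apply Continuous.mul
    · exact (pdy g).continuous.comp ((continuous_fst.fst).prodMk continuous_snd)
    · exact (pdy g).continuous.comp ((continuous_fst.snd).prodMk continuous_snd)
  exact hc.stronglyMeasurable.integral_prod_right'

lemma Kfun_bound (g : SchwartzMap (ℝ × ℝ) ℝ) :
    ∃ C : ℝ, 0 ≤ C ∧ ∀ x s : ℝ, |Kfun g x s| ≤ C / (1 + x ^ 2) * (1 / (1 + s ^ 2)) := by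
  obtain ⟨Ca, hCa0, hCa⟩ := sm_decay_mul (pdy g)
  obtain ⟨Cb, hCb0, hCb⟩ := sm_decay_x (pdy g)
  obtain ⟨B1, hB10, hB1⟩ := sm_bdd (pdy g)
  set Cπ : ℝ := ∫ y : ℝ, 1 / (1 + y ^ 2) with hCπ
  have hCπ0 : 0 ≤ Cπ := integral_nonneg fun y => by positivity
  refine ⟨Ca * Cb * Cπ, by positivity, fun x s => ?_⟩
  have hint : Integrable (fun y => pdy g (x, y) * pdy g (s, y)) :=
    integrable_bdd_mul_line_y (cont_line_y (pdy g) x) (fun y => hB1 (x, y)) (pdy g) s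
  have key : |Kfun g x s| ≤ ∫ y : ℝ, |pdy g (x, y)| * |pdy g (s, y)| := by
    simpa [Kfun, abs_mul] using
      norm_integral_le_integral_norm (μ := volume) (fun y => pdy g (x, y) * pdy g (s, y))
  have hmono : (∫ y : ℝ, |pdy g (x, y)| * |pdy g (s, y)|)
      ≤ ∫ y : ℝ, (Ca / (1 + x ^ 2) * (Cb / (1 + s ^ 2))) * (1 / (1 + y ^ 2)) := by
    apply integral_mono (by simpa [abs_mul] using hint.abs)
    · apply Integrable.const_mul
      simpa [div_eq_mul_inv, one_mul] using (integrable_decay (C := (1:ℝ)))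
    · intro y
      calc |pdy g (x, y)| * |pdy g (s, y)|
          ≤ (Ca / (1 + x ^ 2) * (1 / (1 + y ^ 2))) * (Cb / (1 + s ^ 2)) :=
            mul_le_mul (hCa x y) (hCb s y) (abs_nonneg _) (by positivity)
        _ = (Ca / (1 + x ^ 2) * (Cb / (1 + s ^ 2))) * (1 / (1 + y ^ 2)) := by ring
  have heq : (∫ y : ℝ, (Ca / (1 + x ^ 2) * (Cb / (1 + s ^ 2))) * (1 / (1 + y ^ 2)))
      = (Ca / (1 + x ^ 2) * (Cb / (1 + s ^ 2))) * Cπ := integral_const_mul _ _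
  calc |Kfun g x s| ≤ _ := key
    _ ≤ _ := hmono
    _ = (Ca / (1 + x ^ 2) * (Cb / (1 + s ^ 2))) * Cπ := heq
    _ = Ca * Cb * Cπ / (1 + x ^ 2) * (1 / (1 + s ^ 2)) := by ring

lemma integrable_decay1 : Integrable (fun t : ℝ => 1 / (1 + t ^ 2)) :=
  integrable_decay (C := 1)

lemma integrable_prod_bound {F : ℝ × ℝ → ℝ}
    (hm : AEStronglyMeasurable F ((volume : Measure ℝ).prod volume)) {C : ℝ}
    (hb : ∀ z : ℝ × ℝ, |F z| ≤ C / (1 + z.1 ^ 2) * (1 / (1 + z.2 ^ 2))) :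
    Integrable F ((volume : Measure ℝ).prod volume) := by
  have hdom : Integrable (fun z : ℝ × ℝ => (C / (1 + z.1 ^ 2)) * (1 / (1 + z.2 ^ 2)))
      ((volume : Measure ℝ).prod volume) :=
    (integrable_decay (C := C)).mul_prod integrable_decay1
  exact hdom.mono' hm (Filter.Eventually.of_forall fun z => by simpa using hb z)

lemma Kfun_integral_zero (g : SchwartzMap (ℝ × ℝ) ℝ)
    (hmass : ∀ y : ℝ, (∫ x : ℝ, g (x, y)) = 0) (s : ℝ) :
    ∫ x : ℝ, Kfun g x s = 0 := by
  obtain ⟨Ca, hCa0, hCa⟩ := sm_decay_mul (pdy g)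
  obtain ⟨B1, hB10, hB1⟩ := sm_bdd (pdy g)
  have hint : Integrable (Function.uncurry fun x y => pdy g (x, y) * pdy g (s, y))
      ((volume : Measure ℝ).prod volume) := by
    apply integrable_prod_bound
    · apply Continuous.aestronglyMeasurable
      exact ((pdy g).continuous).mul ((pdy g).continuous.comp
        (continuous_const.prodMk continuous_snd))
    · intro z
      calc |pdy g (z.1, z.2) * pdy g (s, z.2)|
          ≤ (Ca / (1 + z.1 ^ 2) * (1 / (1 + z.2 ^ 2))) * B1 := by
            rw [abs_mul]
            exact mul_le_mul (hCa z.1 z.2) (hB1 _) (abs_nonneg _) (by positivity)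
        _ = Ca * B1 / (1 + z.1 ^ 2) * (1 / (1 + z.2 ^ 2)) := by ring
  have hswap := integral_integral_swap hint
  have h1 : ∀ y : ℝ, (∫ x : ℝ, pdy g (x, y) * pdy g (s, y)) = 0 := by
    intro y
    rw [integral_mul_const]
    have h0 : (∫ a : ℝ, pdy g (a, y)) = 0 := by
      simpa [pdy] using integral_pderivY_eq_zero g hmass y
    rw [h0, zero_mul]
  calc ∫ x : ℝ, Kfun g x s = ∫ y : ℝ, ∫ x : ℝ, pdy g (x, y) * pdy g (s, y) := hswap
    _ = 0 := by simp [h1]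

-- fills
example (g : SchwartzMap (ℝ × ℝ) ℝ) : True := trivial

lemma hKint_lemma (g : SchwartzMap (ℝ × ℝ) ℝ) (s : ℝ) :
    Integrable (fun x => Kfun g x s) := by
  obtain ⟨CK, hCK0, hCK⟩ := Kfun_bound g
  apply (integrable_decay (C := CK)).mono'
  · exact ((Kfun_sm g).comp_measurable
      (measurable_id.prodMk measurable_const)).aestronglyMeasurable
  · refine Filter.Eventually.of_forall fun x => ?_
    have h1 := hCK x s
    have h2 : CK / (1 + x ^ 2) * (1 / (1 + s ^ 2)) ≤ CK / (1 + x ^ 2) := by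
      apply mul_le_of_le_one_right (by positivity)
      rw [div_le_one (by positivity)]
      nlinarith [sq_nonneg s]
    simpa using le_trans h1 h2

lemma hFintouter (g : SchwartzMap (ℝ × ℝ) ℝ) :
    Integrable (Function.uncurry (fun (q : ℝ × ℝ) (s : ℝ) =>
      Set.indicator (Set.Iic q.1) (fun s' => g q * pdy (pdy g) (s', q.2)) s))
      ((volume : Measure (ℝ × ℝ)).prod volume) := by
  set h := pdy (pdy g) with hh
  obtain ⟨Cg, hCg0, hCg⟩ := sm_decay_mul g
  obtain ⟨Ch, hCh0, hCh⟩ := sm_decay_x h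
  have hFeq : Function.uncurry (fun (q : ℝ × ℝ) (s : ℝ) =>
      Set.indicator (Set.Iic q.1) (fun s' => g q * h (s', q.2)) s)
      = Set.indicator {p : (ℝ × ℝ) × ℝ | p.2 ≤ p.1.1}
        (fun p => g p.1 * h (p.2, p.1.2)) := by
    funext p
    simp only [Function.uncurry, Set.indicator_apply, Set.mem_Iic, Set.mem_setOf_eq]
  rw [hFeq]
  have hmeasE : MeasurableSet {p : (ℝ × ℝ) × ℝ | p.2 ≤ p.1.1} :=
    (isClosed_le continuous_snd (continuous_fst.fst)).measurableSet
  have hGc : Continuous (fun p : (ℝ × ℝ) × ℝ => g p.1 * h (p.2, p.1.2)) := by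
    apply Continuous.mul
    · exact g.continuous.comp continuous_fst
    · exact h.continuous.comp (continuous_snd.prodMk (continuous_fst.snd))
  have hf1 : Integrable (fun q : ℝ × ℝ => Cg * Ch / (1 + q.1 ^ 2) * (1 / (1 + q.2 ^ 2)))
      (volume : Measure (ℝ × ℝ)) := by
    rw [Measure.volume_eq_prod]
    exact (integrable_decay (C := Cg * Ch)).mul_prod integrable_decay1
  have hdom : Integrable (fun p : (ℝ × ℝ) × ℝ =>
      (Cg * Ch / (1 + p.1.1 ^ 2) * (1 / (1 + p.1.2 ^ 2))) * (1 / (1 + p.2 ^ 2)))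
      ((volume : Measure (ℝ × ℝ)).prod volume) :=
    hf1.mul_prod integrable_decay1
  apply hdom.mono' (hGc.aestronglyMeasurable.indicator hmeasE)
  refine Filter.Eventually.of_forall fun p => ?_
  by_cases hp : p ∈ {p : (ℝ × ℝ) × ℝ | p.2 ≤ p.1.1}
  · rw [Set.indicator_of_mem hp]
    rw [Real.norm_eq_abs, abs_mul]
    calc |g p.1| * |h (p.2, p.1.2)|
        ≤ (Cg / (1 + p.1.1 ^ 2) * (1 / (1 + p.1.2 ^ 2))) * (Ch / (1 + p.2 ^ 2)) := by
          apply mul_le_mul ?_ (hCh p.2 p.1.2) (abs_nonneg _) (by positivity)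
          have := hCg p.1.1 p.1.2
          simpa using this
      _ = Cg * Ch / (1 + p.1.1 ^ 2) * (1 / (1 + p.1.2 ^ 2)) * (1 / (1 + p.2 ^ 2)) := by
          ring
  · rw [Set.indicator_of_notMem hp]
    simp only [norm_zero]
    positivity

lemma hinner_lemma (g : SchwartzMap (ℝ × ℝ) ℝ) (s : ℝ) :
    (∫ q : ℝ × ℝ, Set.indicator (Set.Iic q.1)
        (fun s' => g q * pdy (pdy g) (s', q.2)) s)
      = - ∫ x in Set.Ici s, Kfun g x s := by
  set h := pdy (pdy g) with hh
  obtain ⟨Cg, hCg0, hCg⟩ := sm_decay_mul g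
  obtain ⟨Bh, hBh0, hBh⟩ := sm_bdd h
  obtain ⟨B0, hB00, hB0⟩ := sm_bdd g
  obtain ⟨B1, hB10, hB1⟩ := sm_bdd (pdy g)
  have hFs_eq : (fun q : ℝ × ℝ => Set.indicator (Set.Iic q.1)
      (fun s' => g q * h (s', q.2)) s)
      = Set.indicator {q : ℝ × ℝ | s ≤ q.1} (fun q => g q * h (s, q.2)) := by
    funext q
    simp only [Set.indicator_apply, Set.mem_Iic, Set.mem_setOf_eq]
  have hFs_int : Integrable (fun q : ℝ × ℝ => Set.indicator (Set.Iic q.1)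
      (fun s' => g q * h (s', q.2)) s) (volume : Measure (ℝ × ℝ)) := by
    rw [hFs_eq]
    have hmeasE : MeasurableSet {q : ℝ × ℝ | s ≤ q.1} :=
      (isClosed_le continuous_const continuous_fst).measurableSet
    have hGc : Continuous (fun q : ℝ × ℝ => g q * h (s, q.2)) :=
      g.continuous.mul (h.continuous.comp (continuous_const.prodMk continuous_snd))
    have hdom : Integrable (fun q : ℝ × ℝ => (Bh * Cg / (1 + q.1 ^ 2)) * (1 / (1 + q.2 ^ 2)))
        (volume : Measure (ℝ × ℝ)) := by
      rw [Measure.volume_eq_prod]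
      exact (integrable_decay (C := Bh * Cg)).mul_prod integrable_decay1
    apply hdom.mono' (hGc.aestronglyMeasurable.indicator hmeasE)
    refine Filter.Eventually.of_forall fun q => ?_
    by_cases hq : q ∈ {q : ℝ × ℝ | s ≤ q.1}
    · rw [Set.indicator_of_mem hq, Real.norm_eq_abs, abs_mul]
      calc |g q| * |h (s, q.2)|
          ≤ (Cg / (1 + q.1 ^ 2) * (1 / (1 + q.2 ^ 2))) * Bh := by
            apply mul_le_mul ?_ (hBh _) (abs_nonneg _) (by positivity)
            simpa using hCg q.1 q.2
        _ = Bh * Cg / (1 + q.1 ^ 2) * (1 / (1 + q.2 ^ 2)) := by ring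
    · rw [Set.indicator_of_notMem hq]
      simp only [norm_zero]
      positivity
  -- iterated integral
  have hiter : (∫ q : ℝ × ℝ, Set.indicator (Set.Iic q.1)
      (fun s' => g q * h (s', q.2)) s)
      = ∫ x : ℝ, ∫ y : ℝ, Set.indicator (Set.Iic x)
          (fun s' => g (x, y) * h (s', y)) s := by
    rw [Measure.volume_eq_prod] at hFs_int ⊢
    exact integral_prod _ hFs_int
  -- inner y integral
  have hibp : ∀ x' : ℝ, (∫ y : ℝ, g (x', y) * h (s, y)) = - Kfun g x' s := by
    intro x'
    have hd := ibpD g x' s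
    have hint1 : Integrable (fun y => pdy g (x', y) * pdy g (s, y)) :=
      integrable_bdd_mul_line_y (cont_line_y (pdy g) x') (fun y => hB1 (x', y)) (pdy g) s
    have hint2 : Integrable (fun y => g (x', y) * h (s, y)) :=
      integrable_bdd_mul_line_y (cont_line_y g x') (fun y => hB0 (x', y)) h s
    rw [integral_add hint1 hint2] at hd
    have : (∫ y : ℝ, pdy g (x', y) * pdy g (s, y)) = Kfun g x' s := rfl
    linarith [hd, this.ge, this.le]
  have hyint : ∀ x : ℝ, (∫ y : ℝ, Set.indicator (Set.Iic x)
      (fun s' => g (x, y) * h (s', y)) s)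
      = Set.indicator (Set.Ici s) (fun x' => - Kfun g x' s) x := by
    intro x
    by_cases hxs : s ≤ x
    · rw [Set.indicator_of_mem (Set.mem_Ici.mpr hxs)]
      rw [← hibp x]
      apply integral_congr_ae
      refine Filter.Eventually.of_forall fun y => ?_
      show (Set.Iic x).indicator (fun s' => g (x, y) * h (s', y)) s = g (x, y) * h (s, y)
      exact Set.indicator_of_mem (Set.mem_Iic.mpr hxs) _
    · rw [Set.indicator_of_notMem (by simpa using hxs)]
      have hz : ∀ y : ℝ, Set.indicator (Set.Iic x) (fun s' => g (x, y) * h (s', y)) s = 0 :=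
        fun y => Set.indicator_of_notMem (by simpa using hxs) _
      simp [hz]
  calc (∫ q : ℝ × ℝ, Set.indicator (Set.Iic q.1) (fun s' => g q * h (s', q.2)) s)
      = ∫ x : ℝ, ∫ y : ℝ, Set.indicator (Set.Iic x) (fun s' => g (x, y) * h (s', y)) s := hiter
    _ = ∫ x : ℝ, Set.indicator (Set.Ici s) (fun x' => - Kfun g x' s) x :=
        integral_congr_ae (Filter.Eventually.of_forall hyint)
    _ = ∫ x in Set.Ici s, - Kfun g x s := integral_indicator measurableSet_Ici
    _ = - ∫ x in Set.Ici s, Kfun g x s := integral_neg _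

lemma hT12_lemma (g : SchwartzMap (ℝ × ℝ) ℝ) :
    (∫ s : ℝ, ∫ x in Set.Ici s, Kfun g x s)
      = ∫ s : ℝ, ∫ x in Set.Iic s, Kfun g x s := by
  obtain ⟨CK, hCK0, hCK⟩ := Kfun_bound g
  set Φ : ℝ → ℝ → ℝ := fun s x => Set.indicator (Set.Ici s) (fun x' => Kfun g x' s) x with hΦ
  have hphieq : Function.uncurry Φ
      = Set.indicator {z : ℝ × ℝ | z.1 ≤ z.2} (fun z : ℝ × ℝ => Kfun g z.2 z.1) := by
    funext z
    simp only [Function.uncurry, hΦ, Set.indicator_apply, Set.mem_Ici, Set.mem_setOf_eq]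
  have hphi_int : Integrable (Function.uncurry Φ) ((volume : Measure ℝ).prod volume) := by
    rw [hphieq]
    have hmeasE : MeasurableSet {z : ℝ × ℝ | z.1 ≤ z.2} :=
      (isClosed_le continuous_fst continuous_snd).measurableSet
    have hsm : AEStronglyMeasurable (fun z : ℝ × ℝ => Kfun g z.2 z.1)
        ((volume : Measure ℝ).prod volume) :=
      ((Kfun_sm g).comp_measurable (measurable_snd.prodMk measurable_fst)).aestronglyMeasurable
    have hdom : Integrable (fun z : ℝ × ℝ => (1 / (1 + z.1 ^ 2)) * (CK / (1 + z.2 ^ 2)))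
        ((volume : Measure ℝ).prod volume) :=
      integrable_decay1.mul_prod (integrable_decay (C := CK))
    apply hdom.mono' (hsm.indicator hmeasE)
    refine Filter.Eventually.of_forall fun z => ?_
    by_cases hz : z ∈ {z : ℝ × ℝ | z.1 ≤ z.2}
    · rw [Set.indicator_of_mem hz, Real.norm_eq_abs]
      calc |Kfun g z.2 z.1| ≤ CK / (1 + z.2 ^ 2) * (1 / (1 + z.1 ^ 2)) := hCK z.2 z.1
        _ = (1 / (1 + z.1 ^ 2)) * (CK / (1 + z.2 ^ 2)) := by ring
    · rw [Set.indicator_of_notMem hz]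
      simp only [norm_zero]
      positivity
  have h1 : ∀ s : ℝ, (∫ x in Set.Ici s, Kfun g x s) = ∫ x : ℝ, Φ s x :=
    fun s => (integral_indicator measurableSet_Ici).symm
  have h2 := integral_integral_swap hphi_int
  have h3 : ∀ x : ℝ, (∫ s : ℝ, Φ s x) = ∫ s in Set.Iic x, Kfun g x s := by
    intro x
    have he : ∀ s : ℝ, Φ s x = Set.indicator (Set.Iic x) (fun s' => Kfun g x s') s := by
      intro s
      simp only [hΦ, Set.indicator_apply, Set.mem_Ici, Set.mem_Iic]
    calc (∫ s : ℝ, Φ s x) = ∫ s : ℝ, Set.indicator (Set.Iic x) (fun s' => Kfun g x s') s :=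
          integral_congr_ae (Filter.Eventually.of_forall he)
      _ = ∫ s in Set.Iic x, Kfun g x s := integral_indicator measurableSet_Iic
  calc (∫ s : ℝ, ∫ x in Set.Ici s, Kfun g x s)
      = ∫ s : ℝ, ∫ x : ℝ, Φ s x := integral_congr_ae (Filter.Eventually.of_forall h1)
    _ = ∫ x : ℝ, ∫ s : ℝ, Φ s x := h2
    _ = ∫ x : ℝ, ∫ s in Set.Iic x, Kfun g x s :=
        integral_congr_ae (Filter.Eventually.of_forall h3)
    _ = ∫ s : ℝ, ∫ x in Set.Iic s, Kfun g s x := rfl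
    _ = ∫ s : ℝ, ∫ x in Set.Iic s, Kfun g x s := by
        apply integral_congr_ae
        refine Filter.Eventually.of_forall fun s => ?_
        apply integral_congr_ae
        exact Filter.Eventually.of_forall fun x => Kfun_swap g s x

lemma termC (g : SchwartzMap (ℝ × ℝ) ℝ)
    (hmass : ∀ y : ℝ, (∫ x : ℝ, g (x, y)) = 0) :
    ∫ q : ℝ × ℝ, g q * (∫ s in Set.Iic q.1, pdy (pdy g) (s, q.2)) = 0 := by
  have hW : ∀ q : ℝ × ℝ, g q * (∫ s in Set.Iic q.1, pdy (pdy g) (s, q.2))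
      = ∫ s : ℝ, Set.indicator (Set.Iic q.1) (fun s' => g q * pdy (pdy g) (s', q.2)) s := by
    intro q
    rw [integral_indicator measurableSet_Iic, integral_const_mul]
  have hswap := integral_integral_swap (hFintouter g)
  have htot : ∀ s : ℝ, (∫ x in Set.Ici s, Kfun g x s) = - ∫ x in Set.Iic s, Kfun g x s := by
    intro s
    have h1 := intervalIntegral.integral_Iic_add_Ioi (b := s) (μ := volume)
      (hKint_lemma g s).integrableOn (hKint_lemma g s).integrableOn
    rw [Kfun_integral_zero g hmass s] at h1
    rw [integral_Ici_eq_integral_Ioi]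
    linarith
  have hT1 : (∫ s : ℝ, ∫ x in Set.Ici s, Kfun g x s) = 0 := by
    have e1 : (∫ s : ℝ, ∫ x in Set.Ici s, Kfun g x s)
        = - ∫ s : ℝ, ∫ x in Set.Iic s, Kfun g x s := by
      rw [← integral_neg]
      exact integral_congr_ae (Filter.Eventually.of_forall fun s => htot s)
    linarith [hT12_lemma g, e1]
  calc ∫ q : ℝ × ℝ, g q * (∫ s in Set.Iic q.1, pdy (pdy g) (s, q.2))
      = ∫ q : ℝ × ℝ, ∫ s : ℝ,
          Set.indicator (Set.Iic q.1) (fun s' => g q * pdy (pdy g) (s', q.2)) s :=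
        integral_congr_ae (Filter.Eventually.of_forall fun q => hW q)
    _ = ∫ s : ℝ, ∫ q : ℝ × ℝ,
          Set.indicator (Set.Iic q.1) (fun s' => g q * pdy (pdy g) (s', q.2)) s := hswap
    _ = ∫ s : ℝ, - ∫ x in Set.Ici s, Kfun g x s :=
        integral_congr_ae (Filter.Eventually.of_forall fun s => hinner_lemma g s)
    _ = - ∫ s : ℝ, ∫ x in Set.Ici s, Kfun g x s := integral_neg _
    _ = 0 := by rw [hT1, neg_zero]

lemma bdd_cont_mul_sm_integrable {f : ℝ × ℝ → ℝ} (hf : Continuous f) {B : ℝ}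
    (hB : ∀ q, |f q| ≤ B) (g : SchwartzMap (ℝ × ℝ) ℝ) :
    Integrable (fun q : ℝ × ℝ => f q * g q) (volume : Measure (ℝ × ℝ)) := by
  obtain ⟨Cg, hCg0, hCg⟩ := sm_decay_mul g
  have hdom : Integrable (fun q : ℝ × ℝ => (B * Cg / (1 + q.1 ^ 2)) * (1 / (1 + q.2 ^ 2)))
      (volume : Measure (ℝ × ℝ)) := by
    rw [Measure.volume_eq_prod]
    exact (integrable_decay (C := B * Cg)).mul_prod integrable_decay1
  apply hdom.mono' ((hf.mul g.continuous).aestronglyMeasurable)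
  refine Filter.Eventually.of_forall fun q => ?_
  rw [Real.norm_eq_abs, Pi.mul_apply, abs_mul]
  calc |f q| * |g q| ≤ B * (Cg / (1 + q.1 ^ 2) * (1 / (1 + q.2 ^ 2))) := by
        apply mul_le_mul (hB q) ?_ (abs_nonneg _) (le_trans (abs_nonneg _) (hB q))
        simpa using hCg q.1 q.2
    _ = B * Cg / (1 + q.1 ^ 2) * (1 / (1 + q.2 ^ 2)) := by ring

lemma global_zero_of_line_zero {f : ℝ × ℝ → ℝ}
    (hint : Integrable f (volume : Measure (ℝ × ℝ)))
    (hline : ∀ y : ℝ, (∫ x : ℝ, f (x, y)) = 0) :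
    ∫ q : ℝ × ℝ, f q = 0 := by
  have huncurry : Function.uncurry (fun x y => f (x, y)) = f := by
    funext q
    simp [Function.uncurry]
  have hint' : Integrable (Function.uncurry fun x y => f (x, y))
      ((volume : Measure ℝ).prod volume) := by
    rw [huncurry, ← Measure.volume_eq_prod]
    exact hint
  have h1 : (∫ q : ℝ × ℝ, f q) = ∫ x : ℝ, ∫ y : ℝ, f (x, y) := by
    rw [Measure.volume_eq_prod]
    exact integral_prod _ (by rwa [huncurry] at hint')
  have h2 := integral_integral_swap hint'
  rw [h1, h2]
  simp [hline]

lemma IA_zero (g : SchwartzMap (ℝ × ℝ) ℝ) :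
    ∫ q : ℝ × ℝ, g q * pdx (pdx (pdx g)) q = 0 := by
  obtain ⟨B, hB0, hB⟩ := sm_bdd g
  apply global_zero_of_line_zero
  · exact bdd_cont_mul_sm_integrable g.continuous hB (pdx (pdx (pdx g)))
  · exact fun y => ibpA g y

lemma IB_zero (g : SchwartzMap (ℝ × ℝ) ℝ) (n : ℕ) :
    ∫ q : ℝ × ℝ, (g q) ^ (n + 1) * pdx g q = 0 := by
  obtain ⟨B, hB0, hB⟩ := sm_bdd g
  apply global_zero_of_line_zero
  · apply bdd_cont_mul_sm_integrable (g.continuous.pow (n + 1)) (B := B ^ (n + 1))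
    intro q
    rw [Pi.pow_apply, abs_pow]
    exact pow_le_pow_left₀ (abs_nonneg _) (hB q) _
  · exact fun y => ibpB g n y

-- the W-type function : boundedness, measurability, integrability of g * W
noncomputable def Wfun (g : SchwartzMap (ℝ × ℝ) ℝ) : ℝ × ℝ → ℝ :=
  fun q => ∫ s in Set.Iic q.1, pdy (pdy g) (s, q.2)

lemma Wfun_bound (g : SchwartzMap (ℝ × ℝ) ℝ) :
    ∃ B : ℝ, 0 ≤ B ∧ ∀ q : ℝ × ℝ, |Wfun g q| ≤ B := by
  obtain ⟨Ch, hCh0, hCh⟩ := sm_decay_x (pdy (pdy g))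
  have hCπ : 0 ≤ ∫ s : ℝ, 1 / (1 + s ^ 2) := integral_nonneg fun s => by positivity
  refine ⟨Ch * (∫ s : ℝ, 1 / (1 + s ^ 2)), mul_nonneg hCh0 hCπ, fun q => ?_⟩
  have hInt : Integrable (fun s => pdy (pdy g) (s, q.2)) := integrable_line_x _ q.2
  calc |Wfun g q| ≤ ∫ s in Set.Iic q.1, |pdy (pdy g) (s, q.2)| := by
        simpa [Wfun] using norm_integral_le_integral_norm
          (μ := volume.restrict (Set.Iic q.1)) (fun s => pdy (pdy g) (s, q.2))
    _ ≤ ∫ s : ℝ, |pdy (pdy g) (s, q.2)| := by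
        apply setIntegral_le_integral hInt.abs
        exact Filter.Eventually.of_forall fun s => abs_nonneg _
    _ ≤ ∫ s : ℝ, Ch * (1 / (1 + s ^ 2)) := by
        apply integral_mono hInt.abs
        · exact integrable_decay1.const_mul Ch
        · intro s
          have := hCh s q.2
          calc |pdy (pdy g) (s, q.2)| ≤ Ch / (1 + s ^ 2) := this
            _ = Ch * (1 / (1 + s ^ 2)) := by ring
    _ = Ch * (∫ s : ℝ, 1 / (1 + s ^ 2)) := integral_const_mul _ _
  
lemma Wfun_sm (g : SchwartzMap (ℝ × ℝ) ℝ) : StronglyMeasurable (Wfun g) := by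
  have hmeasE : MeasurableSet {p : (ℝ × ℝ) × ℝ | p.2 ≤ p.1.1} :=
    (isClosed_le continuous_snd (continuous_fst.fst)).measurableSet
  have hGc : Continuous (fun p : (ℝ × ℝ) × ℝ => pdy (pdy g) (p.2, p.1.2)) :=
    (pdy (pdy g)).continuous.comp (continuous_snd.prodMk (continuous_fst.snd))
  have hsm := (hGc.stronglyMeasurable.indicator hmeasE).integral_prod_right'
    (ν := (volume : Measure ℝ))
  have heq : Wfun g = fun q : ℝ × ℝ => ∫ s : ℝ,
      Set.indicator {p : (ℝ × ℝ) × ℝ | p.2 ≤ p.1.1}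
        (fun p => pdy (pdy g) (p.2, p.1.2)) (q, s) := by
    funext q
    rw [Wfun, ← integral_indicator measurableSet_Iic]
    apply integral_congr_ae
    refine Filter.Eventually.of_forall fun s => ?_
    simp only [Set.indicator_apply, Set.mem_Iic, Set.mem_setOf_eq]
  rw [heq]
  exact hsm

lemma Wfun_mul_integrable (g : SchwartzMap (ℝ × ℝ) ℝ) :
    Integrable (fun q : ℝ × ℝ => g q * Wfun g q) (volume : Measure (ℝ × ℝ)) := by
  obtain ⟨BW, hBW0, hBW⟩ := Wfun_bound g
  obtain ⟨Cg, hCg0, hCg⟩ := sm_decay_mul g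
  have hdom : Integrable (fun q : ℝ × ℝ => (Cg * BW / (1 + q.1 ^ 2)) * (1 / (1 + q.2 ^ 2)))
      (volume : Measure (ℝ × ℝ)) := by
    rw [Measure.volume_eq_prod]
    exact (integrable_decay (C := Cg * BW)).mul_prod integrable_decay1
  apply hdom.mono'
    (g.continuous.aestronglyMeasurable.mul (Wfun_sm g).aestronglyMeasurable)
  refine Filter.Eventually.of_forall fun q => ?_
  show ‖g q * Wfun g q‖ ≤ _
  rw [Real.norm_eq_abs, abs_mul]
  calc |g q| * |Wfun g q| ≤ (Cg / (1 + q.1 ^ 2) * (1 / (1 + q.2 ^ 2))) * BW := by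
        apply mul_le_mul ?_ (hBW q) (abs_nonneg _) (by positivity)
        simpa using hCg q.1 q.2
    _ = Cg * BW / (1 + q.1 ^ 2) * (1 / (1 + q.2 ^ 2)) := by ring

lemma derivline_x (g : SchwartzMap (ℝ × ℝ) ℝ) (y : ℝ) :
    deriv (fun x' => g (x', y)) = fun x => pdx g (x, y) :=
  funext fun x => (lineDerivX' g x y).deriv

lemma derivline_y (g : SchwartzMap (ℝ × ℝ) ℝ) (x : ℝ) :
    deriv (fun y' => g (x, y')) = fun y => pdy g (x, y) :=
  funext fun y => (lineDerivY' g x y).deriv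

lemma iter3x (g : SchwartzMap (ℝ × ℝ) ℝ) (y : ℝ) :
    iteratedDeriv 3 (fun x' => g (x', y)) = fun x => pdx (pdx (pdx g)) (x, y) := by
  rw [show (3:ℕ) = 2+1 from rfl, iteratedDeriv_succ', derivline_x g y,
    show (2:ℕ) = 1+1 from rfl, iteratedDeriv_succ', derivline_x (pdx g) y,
    iteratedDeriv_one, derivline_x (pdx (pdx g)) y]

lemma iter2y (g : SchwartzMap (ℝ × ℝ) ℝ) (x : ℝ) :
    iteratedDeriv 2 (fun y' => g (x, y')) = fun y => pdy (pdy g) (x, y) := by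
  rw [show (2:ℕ) = 1+1 from rfl, iteratedDeriv_succ', derivline_y g x,
    iteratedDeriv_one, derivline_y (pdy g) x]

/-- The Sanz–Serna time discretization of the generalized KP equation
conserves the `L²`-norm: if `u` (playing the role of `uₙ`) and `v` (playing
the role of `uₙ₊₁`) are Schwartz functions on `ℝ²` whose average
`m = (u + v)/2` satisfies the mass-zero constraint and the scheme equation,
then `∫ v² = ∫ u²`. -/
theorem sanz_serna_conserves_L2_norm
    (p : ℕ) (hp : 1 ≤ p) (lam : ℝ) (hlam : lam = -1 ∨ lam = 1)
    (Δt : ℝ) (hΔt : 0 < Δt)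
    (u v : SchwartzMap (ℝ × ℝ) ℝ)
    (m : ℝ → ℝ → ℝ) (hm : ∀ x y : ℝ, m x y = (u (x, y) + v (x, y)) / 2)
    (W : ℝ → ℝ → ℝ)
    (hW : ∀ x y : ℝ,
      W x y = ∫ s in Set.Iic x, iteratedDeriv 2 (fun y' => m s y') y)
    (hmass : ∀ y : ℝ, (∫ x : ℝ, m x y) = 0)
    (hscheme : ∀ x y : ℝ,
      (v (x, y) - u (x, y)) / Δt
        + iteratedDeriv 3 (fun x' => m x' y) x
        + (1 / ((p : ℝ) + 1)) * deriv (fun x' => (m x' y) ^ (p + 1)) x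
        + lam * W x y = 0) :
    (∫ q : ℝ × ℝ, (v q) ^ 2) = ∫ q : ℝ × ℝ, (u q) ^ 2 := by
  set w : SchwartzMap (ℝ × ℝ) ℝ := (2⁻¹ : ℝ) • (u + v) with hwdef
  have hwq : ∀ q : ℝ × ℝ, w q = 2⁻¹ * (u q + v q) := by
    intro q
    rw [hwdef]
    simp [SchwartzMap.smul_apply, SchwartzMap.add_apply]
    ring
  have hmw : ∀ x y : ℝ, m x y = w (x, y) := by
    intro x y
    rw [hm x y, hwq]
    ring
  have hmassw : ∀ y : ℝ, (∫ x : ℝ, w (x, y)) = 0 := by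
    intro y
    rw [← hmass y]
    exact integral_congr_ae (Filter.Eventually.of_forall fun x => (hmw x y).symm)
  -- identifications
  have hx3 : ∀ x y : ℝ, iteratedDeriv 3 (fun x' => m x' y) x = pdx (pdx (pdx w)) (x, y) := by
    intro x y
    rw [show (fun x' => m x' y) = fun x' => w (x', y) from funext fun x' => hmw x' y]
    exact congrFun (iter3x w y) x
  have hy2 : ∀ s y : ℝ, iteratedDeriv 2 (fun y' => m s y') y = pdy (pdy w) (s, y) := by
    intro s y
    rw [show (fun y' => m s y') = fun y' => w (s, y') from funext fun y' => hmw s y']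
    exact congrFun (iter2y w s) y
  have hWw : ∀ x y : ℝ, W x y = Wfun w (x, y) := by
    intro x y
    rw [hW x y, Wfun]
    exact integral_congr_ae (Filter.Eventually.of_forall fun s => hy2 s y)
  have hDp : ∀ x y : ℝ, deriv (fun x' => (m x' y) ^ (p + 1)) x
      = ((p : ℝ) + 1) * (w (x, y)) ^ p * pdx w (x, y) := by
    intro x y
    rw [show (fun x' => (m x' y) ^ (p + 1)) = fun x' => (w (x', y)) ^ (p + 1) from
      funext fun x' => by rw [hmw x' y]]
    have := ((lineDerivX' w x y).pow (p + 1)).deriv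
    simpa [Pi.pow_def] using this
  -- pointwise key identity
  have key : ∀ q : ℝ × ℝ, (v q) ^ 2 - (u q) ^ 2
      = (-2 * Δt) * (w q * pdx (pdx (pdx w)) q)
        + ((-2 * Δt) * ((w q) ^ (p + 1) * pdx w q)
          + (-2 * Δt * lam) * (w q * Wfun w q)) := by
    rintro ⟨x, y⟩
    have hs := hscheme x y
    rw [hx3 x y, hDp x y, hWw x y] at hs
    have hp1 : ((p : ℝ) + 1) ≠ 0 := by positivity
    have hB : (1 / ((p : ℝ) + 1)) * (((p : ℝ) + 1) * (w (x, y)) ^ p * pdx w (x, y))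
        = (w (x, y)) ^ p * pdx w (x, y) := by
      field_simp
    rw [hB] at hs
    have hdq : v (x, y) - u (x, y)
        = -Δt * (pdx (pdx (pdx w)) (x, y) + (w (x, y)) ^ p * pdx w (x, y)
            + lam * Wfun w (x, y)) := by
      have h5 : (v (x, y) - u (x, y)) / Δt
          = -(pdx (pdx (pdx w)) (x, y) + (w (x, y)) ^ p * pdx w (x, y)
              + lam * Wfun w (x, y)) := by linarith
      field_simp at h5
      linarith
    have hsum : u (x, y) + v (x, y) = 2 * w (x, y) := by
      rw [hwq]
      ring
    calc (v (x, y)) ^ 2 - (u (x, y)) ^ 2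
        = (v (x, y) - u (x, y)) * (u (x, y) + v (x, y)) := by ring
      _ = (-Δt * (pdx (pdx (pdx w)) (x, y) + (w (x, y)) ^ p * pdx w (x, y)
            + lam * Wfun w (x, y))) * (2 * w (x, y)) := by rw [hdq, hsum]
      _ = (-2 * Δt) * (w (x, y) * pdx (pdx (pdx w)) (x, y))
          + ((-2 * Δt) * ((w (x, y)) ^ (p + 1) * pdx w (x, y))
            + (-2 * Δt * lam) * (w (x, y) * Wfun w (x, y))) := by
          rw [pow_succ]
          ring
  -- integrability
  obtain ⟨Bw, hBw0, hBw⟩ := sm_bdd w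
  have hintA : Integrable (fun q : ℝ × ℝ => w q * pdx (pdx (pdx w)) q) :=
    bdd_cont_mul_sm_integrable w.continuous hBw (pdx (pdx (pdx w)))
  have hintB : Integrable (fun q : ℝ × ℝ => (w q) ^ (p + 1) * pdx w q) := by
    apply bdd_cont_mul_sm_integrable (w.continuous.pow (p + 1)) (B := Bw ^ (p + 1))
    intro q
    rw [Pi.pow_apply, abs_pow]
    exact pow_le_pow_left₀ (abs_nonneg _) (hBw q) _
  have hintC : Integrable (fun q : ℝ × ℝ => w q * Wfun w q) := Wfun_mul_integrable w
  obtain ⟨Bu, hBu0, hBu⟩ := sm_bdd u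
  obtain ⟨Bv, hBv0, hBv⟩ := sm_bdd v
  have hu2 : Integrable (fun q : ℝ × ℝ => (u q) ^ 2) := by
    have := bdd_cont_mul_sm_integrable u.continuous hBu u
    simpa [pow_two] using this
  have hv2 : Integrable (fun q : ℝ × ℝ => (v q) ^ 2) := by
    have := bdd_cont_mul_sm_integrable v.continuous hBv v
    simpa [pow_two] using this
  -- vanishing integrals
  have hIC := termC w hmassw
  have hICW : (∫ q : ℝ × ℝ, w q * Wfun w q) = 0 := hIC
  have hzero : (∫ q : ℝ × ℝ, ((v q) ^ 2 - (u q) ^ 2)) = 0 := by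
    calc (∫ q : ℝ × ℝ, ((v q) ^ 2 - (u q) ^ 2))
        = ∫ q : ℝ × ℝ, ((-2 * Δt) * (w q * pdx (pdx (pdx w)) q)
            + ((-2 * Δt) * ((w q) ^ (p + 1) * pdx w q)
              + (-2 * Δt * lam) * (w q * Wfun w q))) :=
          integral_congr_ae (Filter.Eventually.of_forall fun q => key q)
      _ = (-2 * Δt) * (∫ q : ℝ × ℝ, w q * pdx (pdx (pdx w)) q)
          + ((-2 * Δt) * (∫ q : ℝ × ℝ, (w q) ^ (p + 1) * pdx w q)
            + (-2 * Δt * lam) * (∫ q : ℝ × ℝ, w q * Wfun w q)) := by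
          have hA' : Integrable (fun q : ℝ × ℝ =>
              (-2 * Δt) * (w q * pdx (pdx (pdx w)) q)) := hintA.const_mul _
          have hB' : Integrable (fun q : ℝ × ℝ =>
              (-2 * Δt) * ((w q) ^ (p + 1) * pdx w q)) := hintB.const_mul _
          have hC' : Integrable (fun q : ℝ × ℝ =>
              (-2 * Δt * lam) * (w q * Wfun w q)) := hintC.const_mul _
          have hBC : Integrable (fun q : ℝ × ℝ =>
              (-2 * Δt) * ((w q) ^ (p + 1) * pdx w q)
                + (-2 * Δt * lam) * (w q * Wfun w q)) := hB'.add hC'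
          rw [integral_add hA' hBC, integral_add hB' hC',
            integral_const_mul, integral_const_mul, integral_const_mul]
      _ = 0 := by
          rw [IA_zero w, IB_zero w p, hICW]
          ring
  have hsub := integral_sub hv2 hu2
  rw [hzero] at hsub
  linarith [hsub]
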